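/- Under the hypotheses of the previous lemma (|g(t) - ḡ| ≤ η on I = [0,T], y solves y' = φ·X₃(g - y) + E with X₃(u)=u+u³), for every t ∈ I one has |y(t) - ḡ| ≤ max(η, |y(0) - ḡ|) + ∫₀ᵗ |E(u)| du. -/
import Mathlib

open Set intervalIntegral

/-- Reach ODE: pointwise bound by max of η and initial deviation plus integral error. -/
theorem reach_ode_pointwise_bound (T : ℝ) (hT : 0 < T)
    (g E φ : ℝ → ℝ)
    (hg : ContinuousOn g (Set.Icc 0 T)) (hE : ContinuousOn E (Set.Icc 0 T))
    (hφc : ContinuousOn φ (Set.Icc 0 T))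
    (hφpos : ∀ t ∈ Set.Icc (0:ℝ) T, 0 < φ t)
    (η gbar : ℝ) (hη : 0 < η)
    (hgbar : ∀ t ∈ Set.Icc (0:ℝ) T, |g t - gbar| ≤ η)
    (y : ℝ → ℝ)
    (hy : ∀ t ∈ Set.Icc (0:ℝ) T,
      HasDerivAt y (φ t * ((g t - y t) + (g t - y t)^3) + E t) t) :
    ∀ t ∈ Set.Icc (0:ℝ) T,
      |y t - gbar| ≤ max η |y 0 - gbar| + ∫ u in (0:ℝ)..t, |E u| := by
  intro t ht
  set M := max η |y 0 - gbar| with hM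
  have hηM : η ≤ M := le_max_left _ _
  -- clamped version of |E|, continuous on all of ℝ
  set Ec : ℝ → ℝ := fun s => |E (max 0 (min T s))| with hEcdef
  have hEcc : Continuous Ec := by
    apply Continuous.abs
    apply hE.comp_continuous (by fun_prop)
    intro x
    constructor
    · exact le_max_left _ _
    · simp [max_le_iff, min_le_left, hT.le]
  have hEceq : ∀ s ∈ Set.Icc (0:ℝ) T, Ec s = |E s| := by
    intro s hs
    have : max 0 (min T s) = s := by
      rw [min_eq_right hs.2, max_eq_right hs.1]
    simp [hEcdef, this]
  have hEcnn : ∀ s, 0 ≤ Ec s := fun s => abs_nonneg _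
  set F : ℝ → ℝ := fun s => ∫ u in (0:ℝ)..s, Ec u with hFdef
  have hFeq : F t = ∫ u in (0:ℝ)..t, |E u| := by
    apply intervalIntegral.integral_congr
    intro u hu
    rw [Set.uIcc_of_le ht.1] at hu
    exact hEceq u ⟨hu.1, hu.2.trans ht.2⟩
  have hFd : ∀ x : ℝ, HasDerivAt F (Ec x) x := fun x =>
    intervalIntegral.integral_hasDerivAt_right (hEcc.intervalIntegrable 0 x)
      (hEcc.stronglyMeasurableAtFilter _ _) hEcc.continuousAt
  have hFnn : ∀ x : ℝ, 0 ≤ x → 0 ≤ F x := fun x hx =>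
    intervalIntegral.integral_nonneg hx (fun u _ => hEcnn u)
  have hycont : ContinuousOn y (Set.Icc 0 T) := fun x hx =>
    (hy x hx).continuousAt.continuousWithinAt
  -- key estimate with barrier
  have key : ∀ ε : ℝ, 0 < ε → |y t - gbar| ≤ M + ε * (1 + t) + F t := by
    intro ε hε
    set B : ℝ → ℝ := fun s => M + ε * (1 + s) + F s with hBdef
    have hBd : ∀ x : ℝ, HasDerivAt B (ε + Ec x) x := by
      intro x
      have h1 : HasDerivAt (fun s : ℝ => M + ε * (1 + s)) ε x := by
        simpa using (((hasDerivAt_id x).const_add (1:ℝ)).const_mul ε).const_add M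
      exact h1.add (hFd x)
    have hB0 : B 0 = M + ε := by simp [hBdef, hFdef]
    -- upper bound
    have hup : y t - gbar ≤ B t := by
      have := image_le_of_deriv_right_lt_deriv_boundary
        (f := fun s => y s - gbar)
        (f' := fun s => φ s * ((g s - y s) + (g s - y s)^3) + E s)
        (a := 0) (b := T)
        (hycont.sub continuousOn_const)
        (fun x hx => ((hy x (Set.Ico_subset_Icc_self hx)).sub_const gbar).hasDerivWithinAt)
        (B := B) (B' := fun s => ε + Ec s)
        (by
          show y 0 - gbar ≤ B 0
          rw [hB0]
          have : y 0 - gbar ≤ M := (le_abs_self _).trans (le_max_right _ _)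
          linarith)
        hBd
        ?_ ht
      · exact this
      · intro x hx hfB
        show φ x * ((g x - y x) + (g x - y x)^3) + E x < ε + Ec x
        have hBx : y x - gbar = B x := hfB
        have hx' : x ∈ Set.Icc (0:ℝ) T := Set.Ico_subset_Icc_self hx
        have hFx : 0 ≤ F x := hFnn x hx.1
        have hMB : M + ε ≤ B x := by
          have hxε : ε * 1 ≤ ε * (1 + x) :=
            mul_le_mul_of_nonneg_left (by linarith [hx.1]) hε.le
          simp only [hBdef]
          linarith
        have hyx : η < y x - gbar := by
          have := hBx ▸ hMB
          linarith
        have hgx := abs_le.mp (hgbar x hx')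
        have hu : g x - y x < 0 := by linarith [hgx.2]
        have hsq : 0 < (g x - y x)^2 := by nlinarith
        have h3 : (g x - y x)^3 < 0 := by nlinarith
        have hdrift : φ x * ((g x - y x) + (g x - y x)^3) < 0 :=
          mul_neg_of_pos_of_neg (hφpos x hx') (by linarith)
        have hEx : E x ≤ Ec x := by
          rw [hEceq x hx']; exact le_abs_self _
        linarith
    -- lower bound
    have hlo : gbar - y t ≤ B t := by
      have := image_le_of_deriv_right_lt_deriv_boundary
        (f := fun s => gbar - y s)
        (f' := fun s => -(φ s * ((g s - y s) + (g s - y s)^3) + E s))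
        (a := 0) (b := T)
        (continuousOn_const.sub hycont)
        (fun x hx => ((hy x (Set.Ico_subset_Icc_self hx)).const_sub gbar).hasDerivWithinAt)
        (B := B) (B' := fun s => ε + Ec s)
        (by
          show gbar - y 0 ≤ B 0
          rw [hB0]
          have : gbar - y 0 ≤ M := by
            have := neg_abs_le (y 0 - gbar)
            have h2 : |y 0 - gbar| ≤ M := le_max_right _ _
            linarith
          linarith)
        hBd
        ?_ ht
      · exact this
      · intro x hx hfB
        show -(φ x * ((g x - y x) + (g x - y x)^3) + E x) < ε + Ec x
        have hBx : gbar - y x = B x := hfB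
        have hx' : x ∈ Set.Icc (0:ℝ) T := Set.Ico_subset_Icc_self hx
        have hFx : 0 ≤ F x := hFnn x hx.1
        have hMB : M + ε ≤ B x := by
          have hxε : ε * 1 ≤ ε * (1 + x) :=
            mul_le_mul_of_nonneg_left (by linarith [hx.1]) hε.le
          simp only [hBdef]
          linarith
        have hyx : gbar - y x > η := by
          have := hBx ▸ hMB
          linarith
        have hgx := abs_le.mp (hgbar x hx')
        have hu : 0 < g x - y x := by linarith [hgx.1]
        have hsq : 0 < (g x - y x)^2 := by nlinarith
        have h3 : 0 < (g x - y x)^3 := by nlinarith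
        have hdrift : 0 < φ x * ((g x - y x) + (g x - y x)^3) :=
          mul_pos (hφpos x hx') (by linarith)
        have hEx : -E x ≤ Ec x := by
          rw [hEceq x hx']; exact neg_le_abs _
        linarith
    have : |y t - gbar| ≤ B t := abs_sub_le_iff.mpr ⟨hup, by simpa [neg_sub] using hlo⟩
    simpa [hBdef] using this
  -- take ε → 0
  rw [← hFeq]
  refine le_of_forall_pos_le_add ?_
  intro δ hδ
  have h1T : (0:ℝ) < 1 + T := by linarith
  have hε : 0 < δ / (1 + T) := div_pos hδ h1T
  have := key (δ / (1 + T)) hε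
  have hbound : δ / (1 + T) * (1 + t) ≤ δ := by
    rw [div_mul_eq_mul_div, div_le_iff₀ h1T]
    nlinarith [ht.2, hδ.le]
  linarith
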